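/- If G is a graph with n vertices and independence number at most α, where α divides n, then for every k the number of independent sets of size k in G is at most the number of independent sets of size k in the disjoint union of α cliques each of size n/α, namely C(α,k)·(n/α)^k. -/

import Mathlib

open Finset

/-- A fractional independence weighting of a graph. -/
def IsFIW {V : Type*} (G : SimpleGraph V) (φ : V → ℝ) : Prop :=
  (∀ v, 0 ≤ φ v ∧ φ v ≤ 1) ∧ ∀ u w, G.Adj u w → φ u + φ w ≤ 1

/-- The fractional independence number of a graph. -/
noncomputable def fracIndepNum {V : Type*} [Fintype V] (G : SimpleGraph V) : ℝ :=
  sSup {s : ℝ | ∃ φ : V → ℝ, IsFIW G φ ∧ s = ∑ v, φ v}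

/-- An independent set of a graph. -/
def IsIndepSet {V : Type*} (G : SimpleGraph V) (s : Set V) : Prop :=
  s.Pairwise fun u w => ¬ G.Adj u w

/-- The independence number of a graph. -/
noncomputable def indepNum {V : Type*} [Fintype V] (G : SimpleGraph V) : ℕ :=
  sSup {n : ℕ | ∃ s : Finset V, IsIndepSet G ↑s ∧ s.card = n}

noncomputable def indCount {V : Type*} [Fintype V] (G : SimpleGraph V) (k : ℕ) : ℕ :=
  Nat.card {s : Finset V // s.card = k ∧ IsIndepSet G ↑s}

lemma indCount_eq {V : Type*} [Fintype V] (G : SimpleGraph V) (k : ℕ)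
    [DecidablePred fun t : Finset V => t.card = k ∧ IsIndepSet G ↑t] :
    indCount G k = #(univ.filter fun t : Finset V => t.card = k ∧ IsIndepSet G ↑t) := by
  rw [indCount, Nat.card_eq_fintype_card, Fintype.card_subtype]

lemma card_le_indepNum {V : Type*} [Fintype V] {G : SimpleGraph V} {t : Finset V}
    (ht : IsIndepSet G ↑t) : t.card ≤ indepNum G := by
  apply le_csSup
  · refine ⟨Fintype.card V, ?_⟩
    rintro x ⟨s, -, rfl⟩
    exact s.card_le_univ
  · exact ⟨t, ht, rfl⟩

lemma indepNum_le {V : Type*} [Fintype V] {G : SimpleGraph V} {β : ℕ}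
    (h : ∀ t : Finset V, IsIndepSet G ↑t → t.card ≤ β) : indepNum G ≤ β := by
  refine csSup_le ⟨0, ∅, by simp [IsIndepSet], by simp⟩ ?_
  rintro x ⟨s, hs, rfl⟩
  exact h s hs

lemma card_coe' {V : Type*} [Fintype V] (W : Finset V) :
    Fintype.card ((W : Set V) : Type _) = W.card := by
  simp

open Classical in
noncomputable def nonNbrs {V : Type*} [Fintype V] (G : SimpleGraph V) (u : V) : Finset V :=
  univ.filter (fun w => w ≠ u ∧ ¬ G.Adj u w)

lemma mem_nonNbrs {V : Type*} [Fintype V] {G : SimpleGraph V} {u w : V} :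
    w ∈ nonNbrs G u ↔ w ≠ u ∧ ¬ G.Adj u w := by
  classical
  rw [nonNbrs]
  simp only [mem_filter, mem_univ, true_and]

lemma indep_of_subtype_indep {V : Type*} [Fintype V] {G : SimpleGraph V} {W : Finset V}
    [DecidablePred fun x : V => x ∈ (W : Set V)]
    {t : Finset V} (hsub : t ⊆ W) (hind : IsIndepSet G ↑t) :
    IsIndepSet (G.induce (W : Set V)) ↑(t.subtype (fun x => x ∈ (W : Set V))) := by
  intro a ha b hb hab
  simp only [Finset.mem_coe, Finset.mem_subtype] at ha hb
  exact hind ha hb (Subtype.coe_injective.ne hab)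

lemma subtype_map_of_subset {V : Type*} [Fintype V] {W : Finset V}
    [DecidablePred fun x : V => x ∈ (W : Set V)] {t : Finset V}
    (hsub : t ⊆ W) :
    (t.subtype (fun x => x ∈ (W : Set V))).map (Function.Embedding.subtype _) = t := by
  rw [Finset.subtype_map]
  exact filter_true_of_mem (fun x hx => hsub hx)

lemma count_subset_le {V : Type*} [Fintype V] (G : SimpleGraph V) (W : Finset V) (k : ℕ)
    [DecidablePred fun t : Finset V => t.card = k ∧ IsIndepSet G ↑t ∧ t ⊆ W] :
    #(univ.filter fun t : Finset V => t.card = k ∧ IsIndepSet G ↑t ∧ t ⊆ W)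
      ≤ indCount (G.induce (W : Set V)) k := by
  classical
  rw [indCount_eq]
  apply card_le_card_of_injOn (fun t => t.subtype (fun x => x ∈ (W : Set V)))
  · intro t ht
    simp only [coe_filter, Set.mem_setOf_eq, mem_coe, mem_filter, mem_univ, true_and] at ht ⊢
    obtain ⟨hcard, hind, hsub⟩ := ht
    refine ⟨?_, indep_of_subtype_indep hsub hind⟩
    have h := congrArg Finset.card (subtype_map_of_subset (t := t) hsub)
    rw [card_map] at h
    omega
  · intro t ht t' ht' h
    dsimp only at h
    simp only [coe_filter, Set.mem_setOf_eq, mem_univ, true_and] at ht ht'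
    have h1 := subtype_map_of_subset (t := t) ht.2.2
    have h2 := subtype_map_of_subset (t := t') ht'.2.2
    rw [← h1, ← h2, h]

lemma count_mem_le {V : Type*} [Fintype V] [DecidableEq V] (G : SimpleGraph V) (u : V) (k : ℕ)
    [DecidablePred fun t : Finset V => t.card = k + 1 ∧ IsIndepSet G ↑t ∧ u ∈ t] :
    #(univ.filter fun t : Finset V => t.card = k + 1 ∧ IsIndepSet G ↑t ∧ u ∈ t)
      ≤ indCount (G.induce ((nonNbrs G u : Finset V) : Set V)) k := by
  classical
  rw [indCount_eq]
  apply card_le_card_of_injOn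
    (fun t => (t.erase u).subtype (fun x => x ∈ ((nonNbrs G u : Finset V) : Set V)))
  · intro t ht
    simp only [coe_filter, Set.mem_setOf_eq, mem_coe, mem_filter, mem_univ, true_and] at ht ⊢
    obtain ⟨hcard, hind, hut⟩ := ht
    have hsub : t.erase u ⊆ nonNbrs G u := by
      intro w hw
      obtain ⟨hwu, hwt⟩ := Finset.mem_erase.mp hw
      exact mem_nonNbrs.mpr ⟨hwu, hind (Finset.mem_coe.mpr hut) (Finset.mem_coe.mpr hwt)
        (Ne.symm hwu)⟩
    have hinde : IsIndepSet G ↑(t.erase u) :=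
      hind.mono (Finset.coe_subset.mpr (erase_subset u t))
    refine ⟨?_, indep_of_subtype_indep hsub hinde⟩
    have h := congrArg Finset.card (subtype_map_of_subset (t := t.erase u) hsub)
    rw [card_map] at h
    rw [h, card_erase_of_mem hut, hcard]
    omega
  · intro t ht t' ht' h
    dsimp only at h
    simp only [coe_filter, Set.mem_setOf_eq, mem_univ, true_and] at ht ht'
    have hsub : t.erase u ⊆ nonNbrs G u := by
      intro w hw
      obtain ⟨hwu, hwt⟩ := Finset.mem_erase.mp hw
      exact mem_nonNbrs.mpr ⟨hwu, ht.2.1 (Finset.mem_coe.mpr ht.2.2) (Finset.mem_coe.mpr hwt)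
        (Ne.symm hwu)⟩
    have hsub' : t'.erase u ⊆ nonNbrs G u := by
      intro w hw
      obtain ⟨hwu, hwt⟩ := Finset.mem_erase.mp hw
      exact mem_nonNbrs.mpr ⟨hwu, ht'.2.1 (Finset.mem_coe.mpr ht'.2.2) (Finset.mem_coe.mpr hwt)
        (Ne.symm hwu)⟩
    have h1 := subtype_map_of_subset (t := t.erase u) hsub
    have h2 := subtype_map_of_subset (t := t'.erase u) hsub'
    have he : t.erase u = t'.erase u := by rw [← h1, ← h2, h]
    rw [← insert_erase ht.2.2, ← insert_erase ht'.2.2, he]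

lemma count_split {V : Type*} [Fintype V] [DecidableEq V] (G : SimpleGraph V)
    (W : Finset V) (k : ℕ) :
    indCount G (k+1) ≤ indCount (G.induce (W : Set V)) (k+1)
      + ∑ u ∈ univ \ W, indCount (G.induce ((nonNbrs G u : Finset V) : Set V)) k := by
  classical
  rw [indCount_eq]
  have hsub : (univ.filter fun t : Finset V => t.card = k+1 ∧ IsIndepSet G ↑t)
      ⊆ (univ.filter fun t : Finset V => t.card = k+1 ∧ IsIndepSet G ↑t ∧ t ⊆ W)
        ∪ (univ \ W).biUnion (fun u =>
            univ.filter fun t : Finset V => t.card = k+1 ∧ IsIndepSet G ↑t ∧ u ∈ t) := by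
    intro t ht
    simp only [mem_filter, mem_univ, true_and] at ht
    by_cases hW : t ⊆ W
    · exact mem_union_left _ (by simp only [mem_filter, mem_univ, true_and]; exact ⟨ht.1, ht.2, hW⟩)
    · obtain ⟨u, hut, huW⟩ := Finset.not_subset.mp hW
      apply mem_union_right
      exact mem_biUnion.mpr ⟨u, by simp [huW], by
        simp only [mem_filter, mem_univ, true_and]; exact ⟨ht.1, ht.2, hut⟩⟩
  calc #(univ.filter fun t : Finset V => t.card = k+1 ∧ IsIndepSet G ↑t)
      ≤ #((univ.filter fun t : Finset V => t.card = k+1 ∧ IsIndepSet G ↑t ∧ t ⊆ W)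
        ∪ (univ \ W).biUnion (fun u =>
            univ.filter fun t : Finset V => t.card = k+1 ∧ IsIndepSet G ↑t ∧ u ∈ t)) :=
        card_le_card hsub
    _ ≤ #(univ.filter fun t : Finset V => t.card = k+1 ∧ IsIndepSet G ↑t ∧ t ⊆ W)
        + #((univ \ W).biUnion (fun u =>
            univ.filter fun t : Finset V => t.card = k+1 ∧ IsIndepSet G ↑t ∧ u ∈ t)) :=
        card_union_le _ _
    _ ≤ #(univ.filter fun t : Finset V => t.card = k+1 ∧ IsIndepSet G ↑t ∧ t ⊆ W)
        + ∑ u ∈ univ \ W, #(univ.filter fun t : Finset V =>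
            t.card = k+1 ∧ IsIndepSet G ↑t ∧ u ∈ t) :=
        Nat.add_le_add_left (card_biUnion_le) _
    _ ≤ indCount (G.induce (W : Set V)) (k+1)
        + ∑ u ∈ univ \ W, indCount (G.induce ((nonNbrs G u : Finset V) : Set V)) k :=
        Nat.add_le_add (count_subset_le G W (k+1))
          (Finset.sum_le_sum fun u _ => count_mem_le G u k)

lemma indepNum_induce_lt {V : Type*} [Fintype V] (G : SimpleGraph V) (u : V) {α : ℕ}
    (hα : indepNum G ≤ α) :
    indepNum (G.induce ((nonNbrs G u : Finset V) : Set V)) ≤ α - 1 := by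
  classical
  apply indepNum_le
  intro t' ht'
  set t : Finset V := t'.map (Function.Embedding.subtype _) with htdef
  have hcard : t.card = t'.card := card_map _
  have hsub : ∀ x ∈ t, x ∈ nonNbrs G u := by
    intro x hx
    obtain ⟨a, _, rfl⟩ := Finset.mem_map.mp hx
    exact a.2
  have hindt : IsIndepSet G ↑t := by
    intro x hx y hy hxy
    obtain ⟨a, ha, rfl⟩ := Finset.mem_map.mp (Finset.mem_coe.mp hx)
    obtain ⟨b, hb, rfl⟩ := Finset.mem_map.mp (Finset.mem_coe.mp hy)
    have hab : a ≠ b := fun hh => hxy (by rw [hh])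
    exact ht' (Finset.mem_coe.mpr ha) (Finset.mem_coe.mpr hb) hab
  have hu : u ∉ t := fun hu => by
    have := hsub u hu
    rw [mem_nonNbrs] at this
    exact this.1 rfl
  have hins : IsIndepSet G ↑(insert u t) := by
    rw [coe_insert]
    rw [IsIndepSet, Set.pairwise_insert]
    refine ⟨hindt, ?_⟩
    intro x hx hxu
    have hxn := (mem_nonNbrs.mp (hsub x (Finset.mem_coe.mp hx))).2
    exact ⟨fun h => hxn h, fun h => hxn h.symm⟩
  have hcard2 : (insert u t).card = t'.card + 1 := by
    rw [card_insert_of_notMem hu, hcard]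
  have hle := card_le_indepNum hins
  omega

lemma indCount_zero {V : Type*} [Fintype V] (G : SimpleGraph V) : indCount G 0 = 1 := by
  classical
  rw [indCount_eq]
  have h : (univ.filter fun t : Finset V => t.card = 0 ∧ IsIndepSet G ↑t) = {∅} := by
    ext t
    simp only [mem_filter, mem_univ, true_and, mem_singleton, card_eq_zero]
    constructor
    · rintro ⟨rfl, -⟩; rfl
    · rintro rfl; exact ⟨rfl, by simp [IsIndepSet]⟩
  rw [h, card_singleton]

lemma indCount_eq_zero_of_lt {V : Type*} [Fintype V] (G : SimpleGraph V) {k : ℕ}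
    (h : indepNum G < k) : indCount G k = 0 := by
  classical
  rw [indCount_eq, card_eq_zero, filter_eq_empty_iff]
  rintro t - ⟨hcard, hind⟩
  have := card_le_indepNum hind
  omega

lemma indCount_eq_zero_of_isEmpty {V : Type*} [Fintype V] [IsEmpty V] (G : SimpleGraph V)
    {k : ℕ} (hk : 0 < k) : indCount G k = 0 := by
  classical
  rw [indCount_eq, card_eq_zero, filter_eq_empty_iff]
  rintro t - ⟨hcard, -⟩
  obtain ⟨x, -⟩ := Finset.card_pos.mp (by omega : 0 < t.card)
  exact (IsEmpty.false x).elim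

lemma bernoulli_aux (m : ℕ) : ∀ x : ℝ, -1 ≤ x → (1+x)^m * (1 - m*x) ≤ 1 := by
  induction m with
  | zero => intro x hx; simp
  | succ m ih =>
    intro x hx
    have h0 : (0:ℝ) ≤ 1 + x := by linarith
    have h1 : (0:ℝ) ≤ (1+x)^m := pow_nonneg h0 m
    have key : (1+x)*(1-((m:ℝ)+1)*x) ≤ 1 - m*x := by nlinarith [sq_nonneg x]
    calc (1+x)^(m+1) * (1 - ((m:ℕ)+1:ℕ)*x) = (1+x)^m * ((1+x)*(1-((m:ℝ)+1)*x)) := by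
          push_cast; ring
      _ ≤ (1+x)^m * (1 - m*x) := mul_le_mul_of_nonneg_left key h1
      _ ≤ 1 := ih x hx

lemma amgm_pow (m : ℕ) (a b : ℝ) (ha : 0 ≤ a) (hb : 0 ≤ b) :
    a^m * b * ((m:ℝ)+1)^(m+1) ≤ ((m:ℝ)*a + b)^(m+1) := by
  set S := (m:ℝ)*a + b with hSdef
  have hma : 0 ≤ (m:ℝ)*a := mul_nonneg (by positivity) ha
  have hS : 0 ≤ S := by positivity
  rcases eq_or_lt_of_le hS with h|h
  · have hb0 : b = 0 := by nlinarith
    rw [hb0]; simp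
    positivity
  · set x : ℝ := ((m:ℝ)+1)*a/S - 1 with hxdef
    have hx : -1 ≤ x := by
      have : 0 ≤ ((m:ℝ)+1)*a/S := by positivity
      simp only [hxdef]; linarith
    have hb1 : (1:ℝ) + x = ((m:ℝ)+1)*a/S := by simp [hxdef]
    have hb2 : (1:ℝ) - m*x = ((m:ℝ)+1)*b/S := by
      field_simp [hxdef]
      rw [hxdef]
      field_simp
      rw [hSdef]
      ring
    have H := bernoulli_aux m x hx
    rw [hb1, hb2] at H
    have e : a^m * b * ((m:ℝ)+1)^(m+1) = ((((m:ℝ)+1)*a/S)^m * ((((m:ℝ)+1))*b/S)) * S^(m+1) := by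
      rw [div_pow, mul_pow]
      field_simp
      ring
    rw [e]
    calc ((((m:ℝ)+1)*a/S)^m * ((((m:ℝ)+1))*b/S)) * S^(m+1) ≤ 1 * S^(m+1) :=
          mul_le_mul_of_nonneg_right H (pow_nonneg hS _)
      _ = S^(m+1) := one_mul _

lemma step_ineq (c m : ℕ) (hm : m ≤ c) (n d : ℝ) (hd : 0 ≤ d) (hdn : d ≤ n) :
    (c.choose (m+1) : ℝ) * (d/c)^(m+1) + (n - d) * (c.choose m : ℝ) * (d/c)^m
      ≤ ((c+1).choose (m+1) : ℝ) * (n/((c:ℝ)+1))^(m+1) := by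
  have hn : 0 ≤ n := le_trans hd hdn
  rcases Nat.eq_zero_or_pos c with hc | hc
  · subst hc
    interval_cases m
    simp [Nat.choose]
    linarith
  have hc0 : (c:ℝ) ≠ 0 := by positivity
  have hcpos : (0:ℝ) < c := by positivity
  obtain ⟨u, hu, rfl⟩ : ∃ u, 0 ≤ u ∧ d = c*u := ⟨d/c, div_nonneg hd hcpos.le, by field_simp⟩
  have hdc : (c:ℝ)*u/c = u := by field_simp
  rw [hdc]
  rcases Nat.eq_zero_or_pos m with hm0 | hm1
  · subst hm0
    simp only [Nat.choose_one_right, Nat.choose_zero_right, pow_one, pow_zero, Nat.cast_one,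
      mul_one, one_mul, Nat.cast_add]
    have h1 : (c:ℝ) * ((c:ℝ)*u/(c:ℝ)) = (c:ℝ)*u := by field_simp
    have h2 : ((c:ℝ)+1) * (n/((c:ℝ)+1)) = n := by field_simp
    rw [Nat.choose_one_right, Nat.choose_one_right, pow_one, pow_one]
    push_cast
    rw [h2]
    linarith [h1]
  -- main case m ≥ 1, c ≥ 1
  set b : ℝ := ((c:ℝ)-m)/((m:ℝ)+1) * u + (n - (c:ℝ)*u) with hbdef
  have hchoose : (c.choose (m+1) : ℝ) * ((m:ℝ)+1) = (c.choose m : ℝ) * ((c:ℝ)-(m:ℝ)) := by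
    have h := Nat.choose_succ_right_eq c m
    have hcast : ((c - m : ℕ):ℝ) = (c:ℝ) - (m:ℝ) := by
      rw [Nat.cast_sub hm]
    exact_mod_cast (by exact_mod_cast congrArg (Nat.cast (R := ℝ)) h : ((c.choose (m+1) * (m+1) : ℕ):ℝ) = ((c.choose m * (c-m) : ℕ):ℝ))
  have hL : (c.choose (m+1) : ℝ) * u^(m+1) + (n - (c:ℝ)*u) * (c.choose m : ℝ) * u^m
      = (c.choose m : ℝ) * (u^m * b) := by
    have hm1' : ((m:ℝ)+1) ≠ 0 := by positivity
    have : (c.choose (m+1) : ℝ) = (c.choose m : ℝ) * ((c:ℝ)-(m:ℝ)) / ((m:ℝ)+1) := by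
      field_simp
      linarith [hchoose]
    rw [this, hbdef, pow_succ]
    field_simp
  rw [hL]
  have hRHSnn : (0:ℝ) ≤ ((c+1).choose (m+1) : ℝ) * (n/((c:ℝ)+1))^(m+1) := by positivity
  rcases le_or_gt 0 b with hb | hb
  swap
  · have : (c.choose m : ℝ) * (u^m * b) ≤ 0 := by
      apply mul_nonpos_of_nonneg_of_nonpos (by positivity)
      exact mul_nonpos_of_nonneg_of_nonpos (by positivity) hb.le
    exact le_trans this hRHSnn
  set a : ℝ := u*((c:ℝ)+1)/((m:ℝ)+1) with hadef
  have ha : 0 ≤ a := by positivity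
  have hsum : (m:ℝ)*a + b = n := by
    rw [hadef, hbdef]
    field_simp
    ring
  have A := amgm_pow m a b ha hb
  rw [hsum] at A
  have e2 : u^m * b * (((c:ℝ)+1)^m*((m:ℝ)+1)) = a^m * b * ((m:ℝ)+1)^(m+1) := by
    rw [hadef, div_pow, mul_pow, pow_succ]
    field_simp
  have key : u^m * b * (((c:ℝ)+1)^m*((m:ℝ)+1)) ≤ n^(m+1) := by rw [e2]; exact A
  have hR' : ((c:ℝ)+1) * (c.choose m:ℝ) = ((c+1).choose (m+1):ℝ)*((m:ℝ)+1) := by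
    exact_mod_cast Nat.add_one_mul_choose_eq c m
  rw [div_pow, ← mul_div_assoc, le_div_iff₀ (by positivity)]
  calc (c.choose m : ℝ) * (u^m * b) * ((c:ℝ)+1)^(m+1)
      = (((c:ℝ)+1) * (c.choose m:ℝ)) * (u^m*b*(((c:ℝ)+1)^m*1)) := by rw [pow_succ]; ring
    _ = (((c+1).choose (m+1):ℝ)*((m:ℝ)+1)) * (u^m*b*(((c:ℝ)+1)^m*1)) := by rw [hR']
    _ = ((c+1).choose (m+1):ℝ) * (u^m*b*(((c:ℝ)+1)^m*((m:ℝ)+1))) := by ring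
    _ ≤ ((c+1).choose (m+1):ℝ) * n^(m+1) := mul_le_mul_of_nonneg_left key (by positivity)




universe u

lemma main_bound (α : ℕ) : ∀ {V : Type u} [Fintype V] (G : SimpleGraph V),
    indepNum G ≤ α → ∀ k : ℕ,
    (indCount G k : ℝ) ≤ (α.choose k : ℝ) * ((Fintype.card V : ℝ)/(α:ℝ))^k := by
  induction α using Nat.strong_induction_on with
  | _ α IH =>
  intro V _ G hG k
  classical
  rcases Nat.eq_zero_or_pos k with rfl | hk
  · rw [indCount_zero]
    simp
  rcases le_or_gt k α with hkα | hkα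
  swap
  · rw [indCount_eq_zero_of_lt G (by omega)]
    simp only [Nat.cast_zero]
    positivity
  have hα1 : 1 ≤ α := le_trans hk hkα
  rcases isEmpty_or_nonempty V with hV | hV
  · rw [indCount_eq_zero_of_isEmpty G hk]
    simp only [Nat.cast_zero]
    positivity
  -- main case
  obtain ⟨v, -, hv⟩ := exists_max_image (univ : Finset V) (fun u => #(nonNbrs G u))
    univ_nonempty
  set W := nonNbrs G v with hWdef
  set c := α - 1 with hcdef
  set m := k - 1 with hmdef
  have hkm : k = m + 1 := by omega
  have hαc : α = c + 1 := by omega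
  have hmc : m ≤ c := by omega
  have hsplit := count_split G W m
  have hIH1 : (indCount (G.induce (W : Set V)) (m+1) : ℝ)
      ≤ (c.choose (m+1) : ℝ) * ((#W : ℝ)/(c:ℝ))^(m+1) := by
    have h := IH c (by omega) (G.induce (W : Set V))
      (by rw [hWdef]; exact indepNum_induce_lt G v hG) (m+1)
    rwa [card_coe'] at h
  have hIH2 : ∀ u ∈ univ \ W, (indCount (G.induce ((nonNbrs G u : Finset V) : Set V)) m : ℝ)
      ≤ (c.choose m : ℝ) * ((#W : ℝ)/(c:ℝ))^m := by
    intro u _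
    have h := IH c (by omega) (G.induce ((nonNbrs G u : Finset V) : Set V))
      (indepNum_induce_lt G u hG) m
    rw [card_coe'] at h
    refine h.trans ?_
    apply mul_le_mul_of_nonneg_left _ (by positivity)
    apply pow_le_pow_left₀ (div_nonneg (Nat.cast_nonneg _) (Nat.cast_nonneg _))
    rcases eq_or_ne (c:ℝ) 0 with hc0 | hc0
    · rw [hc0]; simp
    have hcpos : (0:ℝ) < c := lt_of_le_of_ne (by positivity) (Ne.symm hc0)
    rw [div_le_div_iff_of_pos_right hcpos]
    exact_mod_cast hv u (mem_univ u)
  have hdn : (#W : ℝ) ≤ (Fintype.card V : ℝ) := by exact_mod_cast W.card_le_univ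
  have hstep := step_ineq c m hmc (Fintype.card V : ℝ) (#W : ℝ) (Nat.cast_nonneg _) hdn
  have hcardsd : ((univ \ W).card : ℝ) = (Fintype.card V : ℝ) - (#W : ℝ) := by
    rw [card_sdiff, inter_univ, card_univ]
    exact_mod_cast Nat.cast_sub W.card_le_univ
  calc (indCount G k : ℝ) = (indCount G (m+1) : ℝ) := by rw [← hkm]
    _ ≤ (indCount (G.induce (W : Set V)) (m+1) : ℝ)
        + ∑ u ∈ univ \ W, (indCount (G.induce ((nonNbrs G u : Finset V) : Set V)) m : ℝ) := by
        exact_mod_cast hsplit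
    _ ≤ (c.choose (m+1) : ℝ) * ((#W : ℝ)/(c:ℝ))^(m+1)
        + ∑ u ∈ univ \ W, (c.choose m : ℝ) * ((#W : ℝ)/(c:ℝ))^m :=
        add_le_add hIH1 (Finset.sum_le_sum hIH2)
    _ = (c.choose (m+1) : ℝ) * ((#W : ℝ)/(c:ℝ))^(m+1)
        + ((Fintype.card V : ℝ) - (#W : ℝ)) * (c.choose m : ℝ) * ((#W : ℝ)/(c:ℝ))^m := by
        rw [Finset.sum_const, nsmul_eq_mul, hcardsd]
        ring
    _ ≤ ((c+1).choose (m+1) : ℝ) * ((Fintype.card V : ℝ)/((c:ℝ)+1))^(m+1) := hstep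
    _ = (α.choose k : ℝ) * ((Fintype.card V : ℝ)/(α:ℝ))^k := by
        rw [hαc, hkm]
        push_cast
        ring


/-- If `G` has `n` vertices and independence number at most `α`, where `α ∣ n`, then the
number of independent sets of size `k` in `G` is at most `C(α,k)·(n/α)^k`, the count for
the disjoint union of `α` cliques of size `n/α`. -/
theorem stmt_7 {V : Type*} [Fintype V] (G : SimpleGraph V) (n α k : ℕ)
    (hn : Fintype.card V = n) (hα : indepNum G ≤ α) (hd : α ∣ n) :
    Nat.card {s : Finset V // s.card = k ∧ IsIndepSet G ↑s} ≤
      Nat.choose α k * (n / α) ^ k := by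
  subst hn
  have hcount : Nat.card {s : Finset V // s.card = k ∧ IsIndepSet G ↑s} = indCount G k := rfl
  rw [hcount]
  rcases Nat.eq_zero_or_pos α with rfl | hα0
  · have hn0 : Fintype.card V = 0 := by simpa using hd
    have hVempty : IsEmpty V := Fintype.card_eq_zero_iff.mp hn0
    rcases Nat.eq_zero_or_pos k with rfl | hk
    · rw [indCount_zero]; simp
    · rw [indCount_eq_zero_of_isEmpty G hk]; exact Nat.zero_le _
  · have hmain := main_bound α G hα k
    have hα0' : (α:ℝ) ≠ 0 := Nat.cast_ne_zero.mpr (by omega)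
    have hcast : ((Fintype.card V / α : ℕ) : ℝ) = (Fintype.card V : ℝ)/(α:ℝ) :=
      Nat.cast_div hd hα0'
    have h2 : (indCount G k : ℝ) ≤ ((Nat.choose α k * (Fintype.card V / α) ^ k : ℕ) : ℝ) := by
      push_cast [hcast]
      exact hmain
    exact_mod_cast h2
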